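/- arXiv:1502.02165 — 2 statements merged into one kernel-verified Lean document; each statement's English description precedes it below -/
import Mathlib

section
/- Let κ be a regular uncountable cardinal and ⟨C_α : α < κ, α limit⟩ a coherent sequence: each C_α is a club in α, and whenever α is an accumulation point of C_β (α < β) then C_β ∩ α = C_α. Suppose T' is a club subset of κ such that for all limit points α < β of T', C_α is an initial segment of C_β (i.e., C_α = C_β ∩ α). Then E = ⋃{C_α : α a limit point of T'} is a club in κ that threads the sequence: for every accumulation point α of E, E ∩ α = C_α. Consequently, if ⟨C_α⟩ is a □(κ)-sequence (additionally has no thread), no such club T' can exist. -/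
open Ordinal Set

/-- `C` is closed below `κ`: it contains every limit ordinal `α < κ`
in which `C` is unbounded. -/
def IsClosedIn (C : Set Ordinal) (κ : Ordinal) : Prop :=
  ∀ α, α < κ → Order.IsSuccLimit α → (∀ β, β < α → ∃ γ ∈ C, β < γ ∧ γ < α) → α ∈ C

/-- `C` is unbounded in `κ`. -/
def IsUnboundedIn (C : Set Ordinal) (κ : Ordinal) : Prop :=
  ∀ α, α < κ → ∃ β ∈ C, α ≤ β ∧ β < κ

/-- `C` is a club (closed unbounded) subset of `κ`. -/
def IsClubIn (C : Set Ordinal) (κ : Ordinal) : Prop :=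
  IsClosedIn C κ ∧ IsUnboundedIn C κ

/-- `S` is stationary in `κ`: it meets every club of `κ`. -/
def IsStationaryIn (S : Set Ordinal) (κ : Ordinal) : Prop :=
  ∀ C, IsClubIn C κ → (S ∩ C).Nonempty

/-- The ordinal `κ` is a regular cardinal. -/
def IsRegularOrd (κ : Ordinal) : Prop := κ.cof.ord = κ

/-- `c` is continuous on `μ`: it preserves suprema at limit ordinals below `μ`. -/
def ContOn (c : Ordinal → Ordinal) (μ : Ordinal) : Prop :=
  ∀ lam, lam < μ → Order.IsSuccLimit lam → c lam = sSup (c '' Iio lam)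

/-- `c` maps `μ` cofinally into `κ`. -/
def CofinalMap (c : Ordinal → Ordinal) (μ κ : Ordinal) : Prop :=
  (∀ β, β < μ → c β < κ) ∧ ∀ α, α < κ → ∃ β, β < μ ∧ α ≤ c β

/-- `c` is strictly increasing on `μ`. -/
def StrictIncOn (c : Ordinal → Ordinal) (μ : Ordinal) : Prop :=
  ∀ β γ, β < γ → γ < μ → c β < c γ

/-- `α` is an accumulation point of `A` (a limit ordinal in which `A ∩ α` is unbounded). -/
def IsAccBelow (A : Set Ordinal) (α : Ordinal) : Prop :=
  Order.IsSuccLimit α ∧ ∀ γ, γ < α → ∃ δ ∈ A, γ < δ ∧ δ < α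

lemma aux_acc (κ : Ordinal) (T' : Set Ordinal) (hκ : IsRegularOrd κ)
    (hωκ : Ordinal.omega0 < κ) (hT' : IsClubIn T' κ) (δ : Ordinal) (hδ : δ < κ) :
    ∃ α, δ < α ∧ α < κ ∧ IsAccBelow T' α := by
  have hcof : Cardinal.aleph0 < κ.cof := by
    rw [← Cardinal.ord_lt_ord, Cardinal.ord_aleph0, hκ]; exact hωκ
  have hκlim : Order.IsSuccLimit κ := by
    have := Cardinal.isSuccLimit_ord hcof.le
    rwa [hκ] at this
  have step : ∀ x : {o : Ordinal // o < κ}, ∃ y : {o : Ordinal // o < κ},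
      y.1 ∈ T' ∧ x.1 < y.1 := by
    rintro ⟨x, hx⟩
    obtain ⟨y, hyT, hxy, hyκ⟩ := hT'.2 (Order.succ x) (hκlim.succ_lt hx)
    exact ⟨⟨y, hyκ⟩, hyT, (Order.lt_succ x).trans_le hxy⟩
  choose F hF1 hF2 using step
  set f : ℕ → {o : Ordinal // o < κ} := fun n => F^[n + 1] ⟨δ, hδ⟩ with hf
  have hfs : ∀ n, f (n + 1) = F (f n) := by
    intro n; simp [hf, Function.iterate_succ_apply']
  have hfT : ∀ n, (f n).1 ∈ T' := by
    intro n
    cases n with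
    | zero => exact hF1 _
    | succ m => rw [hfs m]; exact hF1 _
  have hmono : ∀ n, (f n).1 < (f (n + 1)).1 := by
    intro n; rw [hfs n]; exact hF2 (f n)
  set α := ⨆ n, (f n).1 with hα
  have hle : ∀ n, (f n).1 ≤ α := fun n => by rw [hα]; exact Ordinal.le_iSup (fun n => (f n).1) n
  have hlt : ∀ n, (f n).1 < α := fun n => (hmono n).trans_le (hle (n + 1))
  have hακ : α < κ := by
    rw [hα]
    exact Ordinal.iSup_lt_ord_lift (c := κ) (by simpa using hcof) (fun n => (f n).2)
  have hδα : δ < α := by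
    have : δ < (f 0).1 := hF2 ⟨δ, hδ⟩
    exact this.trans (hlt 0)
  have hub : ∀ γ, γ < α → ∃ n, γ < (f n).1 := by
    intro γ hγ
    rw [hα, Ordinal.lt_iSup_iff] at hγ
    exact hγ
  have hαlim : Order.IsSuccLimit α := by
    rw [Ordinal.isSuccLimit_iff]
    refine ⟨((zero_le (a := δ)).trans_lt hδα).ne', Order.isSuccPrelimit_of_succ_lt ?_⟩
    intro γ hγ
    obtain ⟨n, hn⟩ := hub γ hγ
    exact (Order.succ_le_of_lt hn).trans_lt (hlt n)
  refine ⟨α, hδα, hακ, hαlim, fun γ hγ => ?_⟩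
  obtain ⟨n, hn⟩ := hub γ hγ
  exact ⟨(f n).1, hfT n, hn, hlt n⟩

/-- from a coherent sequence and a club `T'` whose limit points give
mutually coherent pieces, the union `E` of those pieces is a club threading the
sequence. -/
theorem stmt8 (κ : Ordinal) (C : Ordinal → Set Ordinal) (T' : Set Ordinal)
    (hκ : IsRegularOrd κ) (hωκ : Ordinal.omega0 < κ)
    (hclub : ∀ α, α < κ → Order.IsSuccLimit α → IsClubIn (C α) α)
    (hcoh : ∀ α β, Order.IsSuccLimit α → Order.IsSuccLimit β → α < β → β < κ → IsAccBelow (C β) α →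
      C β ∩ Iio α = C α)
    (hT' : IsClubIn T' κ)
    (hinit : ∀ α β, α < β → β < κ → IsAccBelow T' α → IsAccBelow T' β →
      C α = C β ∩ Iio α) :
    IsClubIn (⋃ α ∈ {α | α < κ ∧ IsAccBelow T' α}, C α) κ ∧
      ∀ α, α < κ → IsAccBelow (⋃ α ∈ {α | α < κ ∧ IsAccBelow T' α}, C α) α →
        (⋃ α ∈ {α | α < κ ∧ IsAccBelow T' α}, C α) ∩ Iio α = C α := by
  set E := ⋃ α ∈ {α | α < κ ∧ IsAccBelow T' α}, C α with hEdef
  have hmem : ∀ x, x ∈ E ↔ ∃ β, (β < κ ∧ IsAccBelow T' β) ∧ x ∈ C β := by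
    intro x; simp [hEdef, mem_iUnion]
  have hSub : ∀ δ, δ < κ → ∃ α, δ < α ∧ α < κ ∧ IsAccBelow T' α :=
    aux_acc κ T' hκ hωκ hT'
  have hbound : ∀ β, β < κ → IsAccBelow T' β → C β ⊆ Iio β := by
    intro β hβ hacc x hx
    obtain ⟨β', hββ', hβ'κ, hacc'⟩ := hSub β hβ
    rw [hinit β β' hββ' hβ'κ hacc hacc'] at hx
    exact hx.2
  have hE : ∀ β, β < κ → IsAccBelow T' β → E ∩ Iio β = C β := by
    intro β hβκ haccβ
    ext x
    constructor
    · rintro ⟨hxE, hxβ⟩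
      obtain ⟨γ, ⟨hγκ, haccγ⟩, hxγ⟩ := (hmem x).1 hxE
      rcases lt_trichotomy γ β with h | h | h
      · have := hinit γ β h hβκ haccγ haccβ
        rw [this] at hxγ; exact hxγ.1
      · exact h ▸ hxγ
      · have := hinit β γ h hγκ haccβ haccγ
        rw [this]; exact ⟨hxγ, hxβ⟩
    · intro hx
      exact ⟨(hmem x).2 ⟨β, ⟨hβκ, haccβ⟩, hx⟩, hbound β hβκ haccβ hx⟩
  have hunb : IsUnboundedIn E κ := by
    intro δ hδ
    obtain ⟨α, hδα, hακ, hacc⟩ := hSub δ hδ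
    obtain ⟨β, hβC, hδβ, hβα⟩ := (hclub α hακ hacc.1).2 δ hδα
    exact ⟨β, (hmem β).2 ⟨α, ⟨hακ, hacc⟩, hβC⟩, hδβ, hβα.trans hακ⟩
  have hcl : IsClosedIn E κ := by
    intro α hα hαlim hub
    obtain ⟨β, hαβ, hβκ, haccβ⟩ := hSub α hα
    have hαCβ : α ∈ C β := by
      apply (hclub β hβκ haccβ.1).1 α hαβ hαlim
      intro γ hγ
      obtain ⟨δ', hδ'E, h1, h2⟩ := hub γ hγ
      have : δ' ∈ E ∩ Iio β := ⟨hδ'E, h2.trans hαβ⟩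
      rw [hE β hβκ haccβ] at this
      exact ⟨δ', this, h1, h2⟩
    exact (hmem α).2 ⟨β, ⟨hβκ, haccβ⟩, hαCβ⟩
  refine ⟨⟨hcl, hunb⟩, ?_⟩
  intro α hα haccE
  obtain ⟨β, hαβ, hβκ, haccβ⟩ := hSub α hα
  have hsub : ∀ γ, γ < α → ∃ δ ∈ C β, γ < δ ∧ δ < α := by
    intro γ hγ
    obtain ⟨δ', hδ'E, h1, h2⟩ := haccE.2 γ hγ
    have : δ' ∈ E ∩ Iio β := ⟨hδ'E, h2.trans hαβ⟩
    rw [hE β hβκ haccβ] at this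
    exact ⟨δ', this, h1, h2⟩
  have hcohr := hcoh α β haccE.1 haccβ.1 hαβ hβκ ⟨haccE.1, hsub⟩
  rw [← hcohr]
  ext x
  constructor
  · rintro ⟨hxE, hxα⟩
    have : x ∈ E ∩ Iio β := ⟨hxE, hxα.trans hαβ⟩
    rw [hE β hβκ haccβ] at this
    exact ⟨this, hxα⟩
  · rintro ⟨hxC, hxα⟩
    have : x ∈ E ∩ Iio β := by
      rw [hE β hβκ haccβ]; exact hxC
    exact ⟨this.1, hxα⟩
end

section
/- Let μ be a regular uncountable cardinal and suppose that for every pair of stationary subsets S₀, S₁ of a regular uncountable cardinal κ contained in a fixed set T, there is a common reflection point (an ordinal ν < κ of uncountable cofinality with S₀ ∩ ν and S₁ ∩ ν both stationary in ν). If κ carries a □(κ)-sequence, then there exist two stationary subsets of κ with no common reflection point. Hence, under the simultaneous-reflection hypothesis for stationary subsets of T = κ, □(κ) fails. -/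
open Ordinal Set

namespace Stmt13Aux

lemma aleph0_lt_cof_of {κ : Ordinal} (hreg : κ.cof.ord = κ) (hωκ : Ordinal.omega0 < κ) :
    Cardinal.aleph0 < κ.cof := by
  rw [← Cardinal.ord_lt_ord, Cardinal.ord_aleph0, hreg]; exact hωκ

lemma isLimit_of_cof {ν : Ordinal} (h : Cardinal.aleph0 < ν.cof) : Order.IsSuccLimit ν := by
  rcases Ordinal.zero_or_succ_or_isSuccLimit ν with rfl | ⟨a, rfl⟩ | hl
  · rw [Ordinal.cof_zero] at h
    exact absurd h (by simp)
  · rw [Ordinal.cof_succ] at h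
    exact absurd h (not_lt.mpr Cardinal.one_lt_aleph0.le)
  · exact hl

lemma add_one_lt {ν a : Ordinal} (h : Order.IsSuccLimit ν) (ha : a < ν) : a + 1 < ν := by
  rw [Ordinal.add_one_eq_succ]; exact h.succ_lt ha

lemma lt_add_one' (a : Ordinal) : a < a + 1 := by
  rw [Ordinal.add_one_eq_succ]; exact Order.lt_succ a

lemma omega_limit {ν : Ordinal} (hcof : Cardinal.aleph0 < ν.cof)
    (R : Ordinal → Ordinal → Prop)
    (h : ∀ x, x < ν → ∃ y, x < y ∧ y < ν ∧ R x y) {β : Ordinal} (hβ : β < ν) :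
    ∃ (α : Ordinal) (g : ℕ → Ordinal), β < α ∧ α < ν ∧ Order.IsSuccLimit α ∧
      (∀ n, g n < g (n+1) ∧ g (n+1) < α ∧ R (g n) (g (n+1))) ∧
      (∀ x, x < α → ∃ n, x < g n) ∧ g 0 = β := by
  classical
  have F : ∀ x, ∃ y, x < ν → (x < y ∧ y < ν ∧ R x y) := fun x => by
    by_cases hx : x < ν
    · obtain ⟨y, hy⟩ := h x hx; exact ⟨y, fun _ => hy⟩
    · exact ⟨0, fun hx' => absurd hx' hx⟩
  choose f hf using F
  set g : ℕ → Ordinal := fun n => f^[n] β with hgdef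
  have gsucc : ∀ n, g (n+1) = f (g n) := fun n => Function.iterate_succ_apply' f n β
  have hlt : ∀ n, g n < ν := by
    intro n; induction n with
    | zero => exact hβ
    | succ n ih => rw [gsucc n]; exact (hf _ ih).2.1
  have hstep : ∀ n, g n < g (n+1) ∧ R (g n) (g (n+1)) := by
    intro n
    have := hf (g n) (hlt n)
    rw [gsucc n]
    exact ⟨this.1, this.2.2⟩
  set α := ⨆ n, g n with hα
  have hle : ∀ n, g n ≤ α := fun n => le_ciSup (Ordinal.bddAbove_range g) n
  have hlt' : ∀ n, g n < α := fun n => lt_of_lt_of_le (hstep n).1 (hle (n+1))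
  have hαν : α < ν :=
    Ordinal.iSup_lt_ord_lift (by rw [Cardinal.mk_nat, Cardinal.lift_aleph0]; exact hcof) hlt
  have hxlt : ∀ x, x < α → ∃ n, x < g n := by
    intro x hx
    by_contra hc
    push_neg at hc
    exact absurd (ciSup_le hc) (not_le.mpr hx)
  have hlim : Order.IsSuccLimit α := by
    rw [Ordinal.isSuccLimit_iff]
    constructor
    · intro h0
      exact absurd (h0 ▸ hlt' 0) not_lt_zero
    · refine Order.isSuccPrelimit_of_succ_lt fun a ha => ?_
      obtain ⟨n, hn⟩ := hxlt a ha
      exact lt_of_le_of_lt (Order.succ_le_of_lt hn) (hlt' n)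
  exact ⟨α, g, hlt' 0, hαν, hlim,
    fun n => ⟨(hstep n).1, hlt' (n+1), (hstep n).2⟩, hxlt, rfl⟩

lemma bound_lt {κ : Ordinal} (hreg : κ.cof.ord = κ) (hωκ : Ordinal.omega0 < κ)
    {x : Ordinal} (hx : x < κ) (f : Ordinal → Ordinal) (hf : ∀ γ, γ < x → f γ < κ) :
    ∃ y, y < κ ∧ x < y ∧ ∀ γ, γ < x → f γ < y := by
  have hκlim : Order.IsSuccLimit κ := isLimit_of_cof (aleph0_lt_cof_of hreg hωκ)
  set e := Ordinal.ToType.mk (o := x) with he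
  set F : x.ToType → Ordinal := fun i => f ((e.symm i : Iio x) : Ordinal) + 1 with hF
  have hFlt : ∀ i, F i < κ := fun i => add_one_lt hκlim (hf _ (e.symm i).2)
  have hcard : Cardinal.mk x.ToType < κ.cof := by
    rw [Cardinal.mk_toType]
    exact Cardinal.lt_ord.mp (by rw [hreg]; exact hx)
  have hsup : (⨆ i, F i) < κ := Ordinal.iSup_lt_ord hcard hFlt
  refine ⟨(⨆ i, F i) ⊔ (x + 1), max_lt hsup (add_one_lt hκlim hx),
    lt_of_lt_of_le (lt_add_one' x) (le_max_right _ _), ?_⟩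
  intro γ hγ
  have h1 : f γ + 1 ≤ ⨆ i, F i := by
    have := le_ciSup (Ordinal.bddAbove_range F) (e ⟨γ, hγ⟩)
    simpa [hF] using this
  exact lt_of_lt_of_le (lt_of_lt_of_le (lt_add_one' (f γ)) h1) (le_max_left _ _)


lemma club_Iio {ν : Ordinal} (hν : Order.IsSuccLimit ν) : IsClubIn (Iio ν) ν :=
  ⟨fun α hα _ _ => hα, fun x hx => ⟨x, hx, le_rfl, hx⟩⟩

lemma club_Ici {ν c : Ordinal} (hν : Order.IsSuccLimit ν) (hc : c < ν) : IsClubIn (Ici c) ν := by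
  constructor
  · intro α hα hαl hub
    obtain ⟨γ, hγ, _, hγα⟩ := hub 0 hαl.pos
    exact le_of_lt (lt_of_le_of_lt hγ hγα)
  · intro x hx
    exact ⟨max x c, le_max_right x c, le_max_left x c, max_lt hx hc⟩

lemma club_inter {ν : Ordinal} (hcof : Cardinal.aleph0 < ν.cof) {C D : Set Ordinal}
    (hC : IsClubIn C ν) (hD : IsClubIn D ν) : IsClubIn (C ∩ D) ν := by
  have hν : Order.IsSuccLimit ν := isLimit_of_cof hcof
  constructor
  · intro α hα hαl hub
    constructor
    · refine hC.1 α hα hαl (fun β hβ => ?_)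
      obtain ⟨γ, hγ, h1, h2⟩ := hub β hβ
      exact ⟨γ, hγ.1, h1, h2⟩
    · refine hD.1 α hα hαl (fun β hβ => ?_)
      obtain ⟨γ, hγ, h1, h2⟩ := hub β hβ
      exact ⟨γ, hγ.2, h1, h2⟩
  · intro x hx
    have h : ∀ a, a < ν → ∃ b, a < b ∧ b < ν ∧ (b ∈ D ∧ ∃ c' ∈ C, a < c' ∧ c' < b) := by
      intro a ha
      obtain ⟨c', hc'C, hac', hc'ν⟩ := hC.2 (a+1) (add_one_lt hν ha)
      obtain ⟨b, hbD, hcb, hbν⟩ := hD.2 (c'+1) (add_one_lt hν hc'ν)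
      have h1 : a < c' := lt_of_lt_of_le (lt_add_one' a) hac'
      have h2 : c' < b := lt_of_lt_of_le (lt_add_one' c') hcb
      exact ⟨b, h1.trans h2, hbν, hbD, c', hc'C, h1, h2⟩
    obtain ⟨α, g, hxα, hαν, hαl, hstep, hcov, _⟩ := omega_limit hcof _ h hx
    have hαC : α ∈ C := hC.1 α hαν hαl (fun β hβ => by
      obtain ⟨n, hn⟩ := hcov β hβ
      obtain ⟨h1, h2, _, c', hc'C, h3, h4⟩ := hstep n
      exact ⟨c', hc'C, hn.trans h3, h4.trans h2⟩)
    have hαD : α ∈ D := hD.1 α hαν hαl (fun β hβ => by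
      obtain ⟨n, hn⟩ := hcov β hβ
      obtain ⟨h1, h2, hbD, _⟩ := hstep n
      exact ⟨g (n+1), hbD, hn.trans h1, h2⟩)
    exact ⟨α, ⟨hαC, hαD⟩, le_of_lt hxα, hαν⟩

lemma club_isStationary {ν : Ordinal} (hcof : Cardinal.aleph0 < ν.cof) {E : Set Ordinal}
    (hE : IsClubIn E ν) : IsStationaryIn E ν := by
  intro D hD
  obtain ⟨b, hb, _, _⟩ := (club_inter hcof hE hD).2 0 (isLimit_of_cof hcof).pos
  exact ⟨b, hb⟩

lemma acc_club {ν : Ordinal} (hcof : Cardinal.aleph0 < ν.cof) {Cs : Set Ordinal}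
    (hC : IsClubIn Cs ν) : IsClubIn {x | x < ν ∧ IsAccBelow Cs x} ν := by
  have hν := isLimit_of_cof hcof
  constructor
  · intro α hα hαl hub
    refine ⟨hα, hαl, fun x hx => ?_⟩
    obtain ⟨δ, ⟨hδν, hδacc⟩, hxδ, hδα⟩ := hub x hx
    exact ⟨δ, hC.1 δ hδν hδacc.1 hδacc.2, hxδ, hδα⟩
  · intro x hx
    have h : ∀ a, a < ν → ∃ b, a < b ∧ b < ν ∧ b ∈ Cs := fun a ha => by
      obtain ⟨b, hbC, hab, hbν⟩ := hC.2 (a+1) (add_one_lt hν ha)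
      exact ⟨b, lt_of_lt_of_le (lt_add_one' a) hab, hbν, hbC⟩
    obtain ⟨α, g, hxα, hαν, hαl, hstep, hcov, _⟩ := omega_limit hcof (fun _ b => b ∈ Cs) h hx
    refine ⟨α, ⟨hαν, hαl, fun y hy => ?_⟩, le_of_lt hxα, hαν⟩
    obtain ⟨n, hn⟩ := hcov y hy
    exact ⟨g (n+1), (hstep n).2.2, hn.trans (hstep n).1, (hstep n).2.1⟩

lemma diag_club {κ : Ordinal} (hreg : κ.cof.ord = κ) (hωκ : Ordinal.omega0 < κ)
    (D : Ordinal → Set Ordinal) (hD : ∀ γ, γ < κ → IsClubIn (D γ) κ) :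
    IsClubIn {α | α < κ ∧ ∀ γ, γ < α → α ∈ D γ} κ := by
  classical
  have hcof := aleph0_lt_cof_of hreg hωκ
  constructor
  · intro α hα hαl hub
    refine ⟨hα, fun γ hγ => ?_⟩
    refine (hD γ (hγ.trans hα)).1 α hα hαl (fun β hβ => ?_)
    obtain ⟨δ, ⟨hδκ, hδ⟩, h1, h2⟩ := hub (max β γ) (max_lt hβ hγ)
    exact ⟨δ, hδ γ (lt_of_le_of_lt (le_max_right β γ) h1),
      lt_of_le_of_lt (le_max_left β γ) h1, h2⟩
  · intro x hx
    have hstep : ∀ a, a < κ → ∃ b, a < b ∧ b < κ ∧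
        ∀ γ, γ < a → ∃ d, d ∈ D γ ∧ a ≤ d ∧ d < b := by
      intro a ha
      choose dfun hd1 hd2 hd3 using fun γ (hγ : γ < a) => (hD γ (hγ.trans ha)).2 a ha
      set f : Ordinal → Ordinal := fun γ => if h : γ < a then dfun γ h else 0 with hf
      obtain ⟨y, hyκ, hay, hy⟩ := bound_lt hreg hωκ ha f
        (fun γ hγ => by rw [hf]; simp only [hγ, dif_pos]; exact hd3 γ hγ)
      refine ⟨y, hay, hyκ, fun γ hγ => ?_⟩
      refine ⟨dfun γ hγ, hd1 γ hγ, hd2 γ hγ, ?_⟩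
      have := hy γ hγ
      simp only [hf] at this
      rwa [dif_pos hγ] at this
    obtain ⟨α, g, hxα, hακ, hαl, hstepg, hcov, _⟩ := omega_limit hcof
      (fun a b => ∀ γ, γ < a → ∃ d, d ∈ D γ ∧ a ≤ d ∧ d < b) hstep hx
    refine ⟨α, ⟨hακ, fun γ hγ => ?_⟩, le_of_lt hxα, hακ⟩
    refine (hD γ (hγ.trans hακ)).1 α hακ hαl (fun β hβ => ?_)
    obtain ⟨n, hn⟩ := hcov (max β γ) (max_lt hβ hγ)
    obtain ⟨h1, h2, h3⟩ := hstepg n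
    obtain ⟨d, hdD, hgd, hdb⟩ := h3 γ (lt_of_le_of_lt (le_max_right β γ) hn)
    exact ⟨d, hdD, lt_of_lt_of_le (lt_of_le_of_lt (le_max_left β γ) hn) hgd, hdb.trans h2⟩

end Stmt13Aux

open Stmt13Aux

/-- a `□(κ)`-sequence yields two stationary subsets of `κ` with no common
reflection point. -/
theorem stmt13 (κ : Ordinal) (C : Ordinal → Set Ordinal)
    (hκ : IsRegularOrd κ) (hωκ : Ordinal.omega0 < κ)
    (hclub : ∀ α, α < κ → Order.IsSuccLimit α → IsClubIn (C α) α)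
    (hsucc : ∀ α, α < κ → C (α + 1) = {α})
    (hcoh : ∀ α β, α < β → β < κ → IsAccBelow (C β) α → C β ∩ Iio α = C α)
    (hnothread : ¬ ∃ A, IsClubIn A κ ∧
      ∀ α, α < κ → IsAccBelow A α → A ∩ Iio α = C α) :
    ∃ S₀ S₁ : Set Ordinal, S₀ ⊆ Iio κ ∧ S₁ ⊆ Iio κ ∧
      IsStationaryIn S₀ κ ∧ IsStationaryIn S₁ κ ∧
      ¬ ∃ ν, ν < κ ∧ Cardinal.aleph0 < ν.cof ∧
        IsStationaryIn (S₀ ∩ Iio ν) ν ∧ IsStationaryIn (S₁ ∩ Iio ν) ν := by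
  classical
  by_contra hcon
  push_neg at hcon
  have hreg : κ.cof.ord = κ := hκ
  have hcof : Cardinal.aleph0 < κ.cof := aleph0_lt_cof_of hreg hωκ
  have hκl : Order.IsSuccLimit κ := isLimit_of_cof hcof
  -- the trace sets
  set S : Ordinal → Set Ordinal := fun γ => {α | γ < α ∧ α < κ ∧ IsAccBelow (C α) γ} with hSdef
  have hSsub : ∀ γ, S γ ⊆ Iio κ := fun γ α hα => hα.2.1
  set G : Set Ordinal := {γ | γ < κ ∧ IsStationaryIn (S γ) κ} with hGdef
  -- G is unbounded in κ
  have hGunb : ∀ β, β < κ → ∃ γ, γ ∈ G ∧ β < γ := by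
    intro β hβ
    by_contra hA
    push_neg at hA
    have hND : ∀ γ, β < γ → γ < κ → ∃ Dγ, IsClubIn Dγ κ ∧ S γ ∩ Dγ = ∅ := by
      intro γ h1 h2
      have hns : ¬ IsStationaryIn (S γ) κ := fun hs => absurd (hA γ ⟨h2, hs⟩) (not_le.mpr h1)
      rw [IsStationaryIn] at hns
      push_neg at hns
      obtain ⟨Dγ, hDγ, hne⟩ := hns
      exact ⟨Dγ, hDγ, hne⟩
    choose Dfun hD1 hD2 using hND
    set D' : Ordinal → Set Ordinal :=
      fun γ => if h : β < γ ∧ γ < κ then Dfun γ h.1 h.2 else Iio κ with hD'def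
    have hD'club : ∀ γ, γ < κ → IsClubIn (D' γ) κ := by
      intro γ _
      by_cases h : β < γ ∧ γ < κ
      · simp only [hD'def, dif_pos h]; exact hD1 γ h.1 h.2
      · simp only [hD'def, dif_neg h]; exact club_Iio hκl
    have hD'avoid : ∀ γ, β < γ → γ < κ → S γ ∩ D' γ = ∅ := by
      intro γ h1 h2
      simp only [hD'def, dif_pos (And.intro h1 h2)]
      exact hD2 γ h1 h2
    set Δ : Set Ordinal := {α | α < κ ∧ ∀ γ, γ < α → α ∈ D' γ} with hΔdef
    have hΔclub : IsClubIn Δ κ := diag_club hreg hωκ D' hD'club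
    have hβ1 : β + 1 < κ := add_one_lt hκl hβ
    set Δ' : Set Ordinal := Δ ∩ Ici (β + 1) with hΔ'def
    have hΔ'club : IsClubIn Δ' κ := club_inter hcof hΔclub (club_Ici hκl hβ1)
    have hΔ'sub : Δ' ⊆ Iio κ := fun x hx => hx.1.1
    have hΔ'stat : IsStationaryIn Δ' κ := club_isStationary hcof hΔ'club
    obtain ⟨ν, hνκ, hνcof, hstat, -⟩ := hcon Δ' Δ' hΔ'sub hΔ'sub hΔ'stat hΔ'stat
    have hνl : Order.IsSuccLimit ν := isLimit_of_cof hνcof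
    -- β + 1 < ν
    obtain ⟨e, ⟨⟨heΔ, heIci⟩, heν⟩, -⟩ := hstat (Iio ν) (club_Iio hνl)
    have hβ1ν : β + 1 < ν := lt_of_le_of_lt heIci heν
    -- the accumulation points of C ν form a club in ν
    have haccclub := acc_club hνcof (hclub ν hνκ hνl)
    -- pick γ₀ an accumulation point of C ν above β
    obtain ⟨γ₀, ⟨hγ₀ν, hγ₀acc⟩, hβγ₀, -⟩ := haccclub.2 (β + 1) hβ1ν
    have hβltγ₀ : β < γ₀ := lt_of_lt_of_le (lt_add_one' β) hβγ₀
    -- pick α₀ ∈ Δ' an accumulation point of C ν above γ₀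
    have hγ₀1ν : γ₀ + 1 < ν := add_one_lt hνl hγ₀ν
    obtain ⟨α₀, ⟨⟨⟨hα₀Δ, -⟩, hα₀ν⟩, ⟨hα₀ν', hα₀acc⟩, hα₀Ici⟩⟩ :=
      hstat _ (club_inter hνcof haccclub (club_Ici hνl hγ₀1ν))
    have hγ₀α₀ : γ₀ < α₀ := lt_of_lt_of_le (lt_add_one' γ₀) hα₀Ici
    have hα₀κ : α₀ < κ := hα₀ν.trans hνκ
    have hcoheq : C ν ∩ Iio α₀ = C α₀ := hcoh α₀ ν hα₀ν hνκ hα₀acc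
    have hα₀S : α₀ ∈ S γ₀ := by
      refine ⟨hγ₀α₀, hα₀κ, hγ₀acc.1, fun x hx => ?_⟩
      obtain ⟨δ, hδ, h1, h2⟩ := hγ₀acc.2 x hx
      exact ⟨δ, by rw [← hcoheq]; exact ⟨hδ, h2.trans hγ₀α₀⟩, h1, h2⟩
    have hα₀D : α₀ ∈ D' γ₀ := hα₀Δ.2 γ₀ hγ₀α₀
    have := hD'avoid γ₀ hβltγ₀ (hγ₀ν.trans hνκ)
    rw [Set.eq_empty_iff_forall_notMem] at this
    exact this α₀ ⟨hα₀S, hα₀D⟩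
  -- the coherence chain on G
  have hchain : ∀ γ γ', γ ∈ G → γ' ∈ G → γ < γ' → C γ' ∩ Iio γ = C γ := by
    intro γ γ' hγG hγ'G hlt
    obtain ⟨ν, hνκ, hνcof, hst, hst'⟩ :=
      hcon (S γ) (S γ') (hSsub γ) (hSsub γ') hγG.2 hγ'G.2
    have hνl : Order.IsSuccLimit ν := isLimit_of_cof hνcof
    have haccclub := acc_club hνcof (hclub ν hνκ hνl)
    have key : ∀ x, IsStationaryIn (S x ∩ Iio ν) ν → x < ν ∧ IsAccBelow (C ν) x := by
      intro x hstx
      obtain ⟨α, ⟨⟨hxα, hακ, hαacc⟩, hαν⟩, hαν', hαaccν⟩ := hstx _ haccclub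
      have hcoheq : C ν ∩ Iio α = C α := hcoh α ν hαν' hνκ hαaccν
      refine ⟨hxα.trans hαν', hαacc.1, fun z hz => ?_⟩
      obtain ⟨δ, hδ, h1, h2⟩ := hαacc.2 z hz
      rw [← hcoheq] at hδ
      exact ⟨δ, hδ.1, h1, h2⟩
    obtain ⟨hγν, hγacc⟩ := key γ hst
    obtain ⟨hγ'ν, hγ'acc⟩ := key γ' hst'
    have hcoheq' : C ν ∩ Iio γ' = C γ' := hcoh γ' ν hγ'ν hνκ hγ'acc
    have hγaccγ' : IsAccBelow (C γ') γ := by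
      refine ⟨hγacc.1, fun z hz => ?_⟩
      obtain ⟨δ, hδ, h1, h2⟩ := hγacc.2 z hz
      exact ⟨δ, by rw [← hcoheq']; exact ⟨hδ, h2.trans hlt⟩, h1, h2⟩
    exact hcoh γ γ' hlt hγ'G.1 hγaccγ'
  -- elements of G are limits below κ
  have hGlim : ∀ γ, γ ∈ G → Order.IsSuccLimit γ := by
    intro γ hγ
    obtain ⟨α, hαS, -⟩ := hγ.2 (Iio κ) (club_Iio hκl)
    exact hαS.2.2.1
  -- the thread
  set A : Set Ordinal := {x | ∃ γ, γ ∈ G ∧ x ∈ C γ ∧ x < γ} with hAdef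
  have hAγ : ∀ γ, γ ∈ G → A ∩ Iio γ = C γ := by
    intro γ hγG
    apply Set.Subset.antisymm
    · rintro x ⟨⟨γ'', hγ''G, hx1, hx2⟩, hxγ⟩
      rcases lt_trichotomy γ'' γ with h | h | h
      · have := hchain γ'' γ hγ''G hγG h
        rw [← this] at hx1
        exact hx1.1
      · rwa [h] at hx1
      · have := hchain γ γ'' hγG hγ''G h
        rw [← this]
        exact ⟨hx1, hxγ⟩
    · intro x hx
      obtain ⟨γ', hγ'G, hγγ'⟩ := hGunb γ hγG.1
      have := hchain γ γ' hγG hγ'G hγγ'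
      rw [← this] at hx
      exact ⟨⟨γ, hγG, by rw [← this]; exact hx, hx.2⟩, hx.2⟩
  have hAclub : IsClubIn A κ := by
    constructor
    · intro α hα hαl hub
      obtain ⟨γ, hγG, hαγ⟩ := hGunb α hα
      have hCγ := hclub γ hγG.1 (hGlim γ hγG)
      have hαCγ : α ∈ C γ := by
        refine hCγ.1 α hαγ hαl (fun x hx => ?_)
        obtain ⟨δ, hδ, h1, h2⟩ := hub x hx
        have : δ ∈ A ∩ Iio γ := ⟨hδ, h2.trans hαγ⟩
        rw [hAγ γ hγG] at this
        exact ⟨δ, this, h1, h2⟩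
      exact ⟨γ, hγG, hαCγ, hαγ⟩
    · intro x hx
      obtain ⟨γ, hγG, hxγ⟩ := hGunb x hx
      have hCγ := hclub γ hγG.1 (hGlim γ hγG)
      obtain ⟨c, hc, hxc, hcγ⟩ := hCγ.2 x hxγ
      exact ⟨c, ⟨γ, hγG, hc, hcγ⟩, hxc, hcγ.trans hγG.1⟩
  have hthread : ∀ α, α < κ → IsAccBelow A α → A ∩ Iio α = C α := by
    intro α hα hαacc
    obtain ⟨γ, hγG, hαγ⟩ := hGunb α hα
    have haccCγ : IsAccBelow (C γ) α := by
      refine ⟨hαacc.1, fun x hx => ?_⟩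
      obtain ⟨δ, hδ, h1, h2⟩ := hαacc.2 x hx
      have : δ ∈ A ∩ Iio γ := ⟨hδ, h2.trans hαγ⟩
      rw [hAγ γ hγG] at this
      exact ⟨δ, this, h1, h2⟩
    have h1 : C γ ∩ Iio α = C α := hcoh α γ hαγ hγG.1 haccCγ
    calc A ∩ Iio α = (A ∩ Iio γ) ∩ Iio α := by
          rw [Set.inter_assoc, Set.Iio_inter_Iio, min_eq_right (le_of_lt hαγ)]
      _ = C γ ∩ Iio α := by rw [hAγ γ hγG]
      _ = C α := h1
  exact hnothread ⟨A, hAclub, hthread⟩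
end
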